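/- A bid b > 0 is a pure Nash equilibrium, i.e. b is a minimizer of a ↦ c(a;b) over a ∈ [0,∞), if and only if b = b^e = CρW₀/(1−ρ); moreover the resulting equilibrium cost is c(b^e;b^e) = C(1+ρ)W₀/(1−ρ). -/

import Mathlib

/-- Expected waiting time `W(a; b)` of a tagged customer bidding `a` when all
other customers bid `b`, in the homogeneous accumulating-priority M/G/1 queue
with utilization `ρ` and mean residual service time `W0`. -/
noncomputable def waitW (ρ W0 b a : ℝ) : ℝ :=
  if a ≤ b then W0 / (1 - ρ) * b / ((1 - ρ) * b + ρ * a)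
  else W0 / (1 - ρ) * ((1 - ρ) * a + ρ * b) / a

/-- Cost `c(a;b) = C·W(a;b) + a` of a tagged customer bidding `a` against crowd bid `b`. -/
noncomputable def costC (ρ W0 C b a : ℝ) : ℝ := C * waitW ρ W0 b a + a

/-- The equilibrium bid `b^e = CρW₀/(1-ρ)`. -/
noncomputable def eqBid (ρ W0 C : ℝ) : ℝ := C * ρ * W0 / (1 - ρ)

lemma cost_diff_le (ρ W0 C b a : ℝ) (hρ0 : 0 < ρ) (hρ1 : ρ < 1)
    (hb : 0 < b) (ha : 0 ≤ a) (hab : a ≤ b) :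
    costC ρ W0 C b a - costC ρ W0 C b b
      = (b - a) * (C * W0 * ρ / ((1 - ρ) * ((1 - ρ) * b + ρ * a)) - 1) := by
  have h1 : (0:ℝ) < 1 - ρ := by linarith
  have hD : (0:ℝ) < (1 - ρ) * b + ρ * a := by positivity
  simp only [costC, waitW, if_pos hab, if_pos (le_refl b)]
  field_simp
  ring

lemma cost_diff_gt (ρ W0 C b a : ℝ) (hρ0 : 0 < ρ) (hρ1 : ρ < 1)
    (hb : 0 < b) (hab : b < a) :
    costC ρ W0 C b a - costC ρ W0 C b b
      = (a - b) * (1 - C * ρ * W0 / ((1 - ρ) * a)) := by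
  have h1 : (0:ℝ) < 1 - ρ := by linarith
  have ha : (0:ℝ) < a := lt_trans hb hab
  simp only [costC, waitW, if_neg (not_le.mpr hab), if_pos (le_refl b)]
  field_simp
  ring

theorem nash_equilibrium_homogeneous (ρ W0 C : ℝ) (hρ0 : 0 < ρ) (hρ1 : ρ < 1)
    (hW0 : 0 < W0) (hC : 0 < C) (b : ℝ) (hb : 0 < b) :
    ((∀ a : ℝ, 0 ≤ a → costC ρ W0 C b b ≤ costC ρ W0 C b a) ↔ b = eqBid ρ W0 C) ∧
    costC ρ W0 C (eqBid ρ W0 C) (eqBid ρ W0 C) = C * (1 + ρ) * W0 / (1 - ρ) := by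
  have h1 : (0:ℝ) < 1 - ρ := by linarith
  set be : ℝ := C * ρ * W0 / (1 - ρ) with hbe_def
  have hbe : 0 < be := by positivity
  have hbe' : be * (1 - ρ) = C * ρ * W0 := by
    field_simp [hbe_def]
    rw [hbe_def, div_mul_cancel₀ _ h1.ne']
    ring
  have hEq : eqBid ρ W0 C = be := rfl
  constructor
  · constructor
    · -- equilibrium ⇒ b = be
      intro H
      by_contra hne
      rw [hEq] at hne
      rcases lt_or_gt_of_ne hne with hlt | hgt
      · -- b < be : deviate upward to a = (b+be)/2
        set a : ℝ := (b + be) / 2 with ha_def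
        have hba : b < a := by rw [ha_def]; linarith
        have habe : a < be := by rw [ha_def]; linarith
        have ha0 : 0 < a := lt_trans hb hba
        have hH := H a (le_of_lt ha0)
        have hd := cost_diff_gt ρ W0 C b a hρ0 hρ1 hb hba
        have hfac : 1 - C * ρ * W0 / ((1 - ρ) * a) < 0 := by
          rw [← hbe']
          rw [sub_neg]
          rw [lt_div_iff₀ (by positivity)]
          nlinarith
        nlinarith [mul_pos (sub_pos.mpr hba) (neg_pos.mpr hfac)]
      · -- b > be : deviate downward
        set a : ℝ := max (((be - (1 - ρ) * b) / ρ + b) / 2) 0 with ha_def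
        have ha0 : 0 ≤ a := le_max_right _ _
        have ha0' : (be - (1 - ρ) * b) / ρ < b := by
          rw [div_lt_iff₀ hρ0]; nlinarith
        have hab : a < b := max_lt (by linarith) hb
        have hD : be < (1 - ρ) * b + ρ * a := by
          have h2 : ((be - (1 - ρ) * b) / ρ + b) / 2 ≤ a := le_max_left _ _
          have h3 : ρ * ((be - (1 - ρ) * b) / ρ) = be - (1 - ρ) * b := by
            field_simp
          nlinarith [mul_le_mul_of_nonneg_left h2 (le_of_lt hρ0)]
        have hH := H a ha0
        have hd := cost_diff_le ρ W0 C b a hρ0 hρ1 hb ha0 (le_of_lt hab)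
        have hDpos : (0:ℝ) < (1 - ρ) * b + ρ * a := lt_trans hbe hD
        have hfac : C * W0 * ρ / ((1 - ρ) * ((1 - ρ) * b + ρ * a)) - 1 < 0 := by
          rw [sub_neg, div_lt_one (by positivity)]
          nlinarith
        nlinarith [mul_pos (sub_pos.mpr hab) (neg_pos.mpr hfac)]
    · -- b = be ⇒ equilibrium
      intro hbeq
      rw [hEq] at hbeq
      intro a ha
      rcases le_or_gt a b with hab | hab
      · have hd := cost_diff_le ρ W0 C b a hρ0 hρ1 hb ha hab
        have hDpos : (0:ℝ) < (1 - ρ) * b + ρ * a := by positivity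
        have hfac : 0 ≤ C * W0 * ρ / ((1 - ρ) * ((1 - ρ) * b + ρ * a)) - 1 := by
          rw [sub_nonneg, le_div_iff₀ (by positivity)]
          have hbb : b * (1 - ρ) = C * ρ * W0 := by rw [hbeq]; exact hbe'
          have hDle : (1 - ρ) * b + ρ * a ≤ b := by nlinarith
          nlinarith [mul_le_mul_of_nonneg_left hDle h1.le]
        nlinarith [mul_nonneg (sub_nonneg.mpr hab) hfac]
      · have hd := cost_diff_gt ρ W0 C b a hρ0 hρ1 hb hab
        have ha' : (0:ℝ) < a := lt_trans hb hab
        have hfac : 0 ≤ 1 - C * ρ * W0 / ((1 - ρ) * a) := by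
          rw [sub_nonneg, div_le_one (by positivity)]
          have : b * (1 - ρ) = C * ρ * W0 := by rw [hbeq]; exact hbe'
          nlinarith
        nlinarith [mul_nonneg (sub_nonneg.mpr (le_of_lt hab)) hfac]
  · -- cost value at equilibrium
    rw [hEq]
    simp only [costC, waitW, if_pos (le_refl be)]
    have hD : (1 - ρ) * be + ρ * be = be := by ring
    rw [hD, mul_div_assoc, div_self hbe.ne', mul_one, hbe_def]
    field_simp
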